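/- For any connected graph G of order n ≥ 4 and size m, the total dominator chromatic number of the complement of the central graph of G equals n if G is a tree (i.e., equals m+1 when m = n−1), and equals m otherwise (when m ≥ n). -/

import Mathlib

open SimpleGraph

/-- The central graph `C(G)`: subdivide each edge of `G` once (vertex `c_e` for each
edge `e`) and join all non-adjacent pairs of original vertices. -/
def centralGraph {V : Type*} (G : SimpleGraph V) : SimpleGraph (V ⊕ G.edgeSet) where
  Adj x y :=
    match x, y with
    | Sum.inl u, Sum.inl v => u ≠ v ∧ ¬ G.Adj u v
    | Sum.inl u, Sum.inr e => u ∈ (e : Sym2 V)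
    | Sum.inr e, Sum.inl u => u ∈ (e : Sym2 V)
    | Sum.inr _, Sum.inr _ => False
  symm := by
    refine ⟨?_⟩
    rintro (u | e) (v | f) h
    · exact ⟨h.1.symm, fun a => h.2 a.symm⟩
    · exact h
    · exact h
    · exact h
  loopless := by
    refine ⟨?_⟩
    rintro (u | e) h
    · exact h.1 rfl
    · exact h

/-- `f` is a total dominator coloring of `G`: a proper coloring such that every
vertex is adjacent to all vertices of some (nonempty) color class. -/
def IsTDColoring {V : Type*} (G : SimpleGraph V) (f : V → ℕ) : Prop :=
  (∀ u v, G.Adj u v → f u ≠ f v) ∧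
  ∀ v, ∃ c, (∃ w, f w = c) ∧ ∀ w, f w = c → G.Adj v w

/-- Total dominator chromatic number: minimum number of colors in a TDC. -/
noncomputable def tdcn {V : Type*} (G : SimpleGraph V) : ℕ :=
  sInf {k | ∃ f : V → ℕ, IsTDColoring G f ∧ ∀ v, f v < k}

/-- Total domination number. -/
noncomputable def tdn {V : Type*} (G : SimpleGraph V) : ℕ :=
  sInf {k | ∃ S : Set V, S.ncard = k ∧ ∀ v, ∃ u ∈ S, G.Adj v u}

/-- The join of two graphs. -/
def joinGraph {α β : Type*} (G : SimpleGraph α) (H : SimpleGraph β) :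
    SimpleGraph (α ⊕ β) where
  Adj x y :=
    match x, y with
    | Sum.inl u, Sum.inl v => G.Adj u v
    | Sum.inr u, Sum.inr v => H.Adj u v
    | Sum.inl _, Sum.inr _ => True
    | Sum.inr _, Sum.inl _ => True
  symm := by refine ⟨?_⟩; rintro (u | u) (v | v) h <;> first | exact h.symm | trivial
  loopless := by refine ⟨?_⟩; rintro (u | u) h <;> exact h.ne rfl

/-- The path graph on `n` vertices. -/
def pathG (n : ℕ) : SimpleGraph (Fin n) :=
  SimpleGraph.fromRel (fun i j => (i : ℕ) + 1 = (j : ℕ))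

/-- The cycle graph on `n` vertices. -/
def cycleG (n : ℕ) : SimpleGraph (ZMod n) :=
  SimpleGraph.fromRel (fun i j => i - j = 1)

/-- The double star `S_{1,n,n}`: center `0`, support vertices `1,...,n`
(adjacent to the center), each `i` with its own pendant `n+i`. -/
def doubleStar (n : ℕ) : SimpleGraph (Fin (2 * n + 1)) :=
  SimpleGraph.fromRel (fun a b =>
    ((a : ℕ) = 0 ∧ 1 ≤ (b : ℕ) ∧ (b : ℕ) ≤ n) ∨
    (1 ≤ (a : ℕ) ∧ (a : ℕ) ≤ n ∧ (b : ℕ) = (a : ℕ) + n))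

/-- The disjoint union of a family of graphs. -/
def sigmaGraph {ι : Type*} {V : ι → Type*} (G : ∀ i, SimpleGraph (V i)) :
    SimpleGraph (Σ i, V i) :=
  SimpleGraph.fromRel (fun x y =>
    ∃ (i : ι) (u v : V i), (G i).Adj u v ∧ x = ⟨i, u⟩ ∧ y = ⟨i, v⟩)
namespace TDaux
variable {V : Type*} {G : SimpleGraph V}

lemma cAdj_ll {u v : V} : (centralGraph G)ᶜ.Adj (.inl u) (.inl v) ↔ G.Adj u v := by
  rw [compl_adj]
  constructor
  · rintro ⟨hne, h2⟩
    by_contra hadj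
    exact h2 ⟨fun h => hne (congrArg _ h), hadj⟩
  · intro h
    exact ⟨fun hh => h.ne (Sum.inl.inj hh), fun h' => h'.2 h⟩

lemma cAdj_lr {u : V} {e : G.edgeSet} :
    (centralGraph G)ᶜ.Adj (.inl u) (.inr e) ↔ u ∉ (e : Sym2 V) := by
  rw [compl_adj]
  exact ⟨fun h => h.2, fun h => ⟨fun hh => Sum.inl_ne_inr hh, h⟩⟩

lemma cAdj_rl {u : V} {e : G.edgeSet} :
    (centralGraph G)ᶜ.Adj (.inr e) (.inl u) ↔ u ∉ (e : Sym2 V) := by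
  rw [compl_adj]
  exact ⟨fun h => h.2, fun h => ⟨fun hh => Sum.inr_ne_inl hh, h⟩⟩

lemma cAdj_rr {e f : G.edgeSet} :
    (centralGraph G)ᶜ.Adj (.inr e) (.inr f) ↔ e ≠ f := by
  rw [compl_adj]
  exact ⟨fun h hef => h.1 (congrArg _ hef), fun h => ⟨fun hh => h (Sum.inr.inj hh), fun hh => hh⟩⟩

lemma dist_le_dist_add_one (hc : G.Connected) {r x y : V} (h : G.Adj x y) :
    G.dist r y ≤ G.dist r x + 1 := by
  obtain ⟨w, hw⟩ := (hc r x).exists_walk_length_eq_dist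
  have := dist_le (w.concat h)
  rwa [Walk.length_concat, hw] at this

lemma exists_parent (hc : G.Connected) (r : V) :
    ∃ p : V → V, ∀ u, u ≠ r → G.Adj u (p u) ∧ G.dist r (p u) + 1 = G.dist r u := by
  have H : ∀ u, u ≠ r → ∃ x, G.Adj u x ∧ G.dist r x + 1 = G.dist r u := by
    intro u hu
    obtain ⟨w, hw⟩ := (hc r u).exists_walk_length_eq_dist
    obtain ⟨x, hadj, q, hq⟩ := Walk.exists_eq_cons_of_ne hu w.reverse
    refine ⟨x, hadj, ?_⟩
    have hlen : q.length + 1 = G.dist r u := by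
      have h2 : w.reverse.length = w.length := Walk.length_reverse w
      rw [hq, Walk.length_cons] at h2
      rw [hw] at h2
      omega
    have h1 : G.dist r x ≤ q.length := by
      have := dist_le q.reverse
      rwa [Walk.length_reverse] at this
    have h2 : G.dist r u ≤ G.dist r x + 1 := dist_le_dist_add_one hc hadj.symm
    omega
  classical
  refine ⟨fun u => if h : u ≠ r then (H u h).choose else r, fun u hu => ?_⟩
  simp only [dif_pos hu]
  exact (H u hu).choose_spec

lemma parent_inj {r : V} {p : V → V}
    (hp : ∀ u, u ≠ r → G.Adj u (p u) ∧ G.dist r (p u) + 1 = G.dist r u)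
    {u v : V} (hu : u ≠ r) (hv : v ≠ r) (h : s(u, p u) = s(v, p v)) : u = v := by
  rw [Sym2.eq_iff] at h
  rcases h with ⟨h1, _⟩ | ⟨h1, h2⟩
  · exact h1
  · have hu' := (hp u hu).2
    have hv' := (hp v hv).2
    rw [h2] at hu'
    rw [← h1] at hv'
    omega


lemma exists_not3 {α : Type*} [Fintype α] (h : 4 ≤ Fintype.card α) (a b c : α) :
    ∃ w, w ≠ a ∧ w ≠ b ∧ w ≠ c := by
  classical
  by_contra h'
  push_neg at h'
  have hsub : (Finset.univ : Finset α) ⊆ {a, b, c} := by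
    intro w _
    simp only [Finset.mem_insert, Finset.mem_singleton]
    by_cases h1 : w = a
    · exact Or.inl h1
    by_cases h2 : w = b
    · exact Or.inr (Or.inl h2)
    · exact Or.inr (Or.inr (h' w h1 h2))
  have := Finset.card_le_card hsub
  have h3 : ({a, b, c} : Finset α).card ≤ 3 := by
    apply le_trans (Finset.card_insert_le _ _)
    have := Finset.card_insert_le b ({c} : Finset α)
    simp only [Finset.card_singleton] at this ⊢
    omega
  rw [Finset.card_univ] at this
  omega

lemma connected_sdiff {r s : V} (hc : G.Connected)
    (h : (G \ fromEdgeSet {s(r, s)}).Reachable r s) :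
    (G \ fromEdgeSet {s(r, s)}).Connected := by
  rw [connected_iff]
  refine ⟨fun a b => ?_, hc.nonempty⟩
  obtain ⟨w⟩ := hc a b
  induction w with
  | nil => exact Reachable.refl _
  | @cons x y z hadj q ih =>
    refine Reachable.trans ?_ ih
    by_cases he : s(x, y) = s(r, s)
    · rw [Sym2.eq_iff] at he
      rcases he with ⟨rfl, rfl⟩ | ⟨rfl, rfl⟩
      · exact h
      · exact h.symm
    · refine Adj.reachable ?_
      rw [sdiff_adj, fromEdgeSet_adj]
      exact ⟨hadj, fun hh => he hh.1⟩

lemma exists_cherry [Fintype V] (hc : G.Connected) (hac : G.IsAcyclic)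
    (h4 : 4 ≤ Fintype.card V) :
    ∃ a b a', G.Adj a b ∧ G.Adj a' b ∧ ¬ G.Adj a a' ∧ a ≠ a' := by
  classical
  obtain ⟨u⟩ := hc.nonempty
  obtain ⟨p, hp⟩ := exists_parent hc u
  by_cases hfar : ∃ w, 2 ≤ G.dist u w
  · obtain ⟨w, hw⟩ := hfar
    have hwu : w ≠ u := by
      intro h; rw [h] at hw; simp [SimpleGraph.dist_self] at hw
    obtain ⟨hadj1, hd1⟩ := hp w hwu
    have hbu : p w ≠ u := by
      intro h
      rw [h, SimpleGraph.dist_self] at hd1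
      omega
    obtain ⟨hadj2, hd2⟩ := hp (p w) hbu
    refine ⟨w, p w, p (p w), hadj1, hadj2.symm, ?_, ?_⟩
    · intro hadj
      have := dist_le_dist_add_one hc (r := u) hadj.symm
      omega
    · intro h
      rw [← h] at hd2
      omega
  · push_neg at hfar
    have hadjall : ∀ w, w ≠ u → G.Adj u w := by
      intro w hwu
      have h1 : G.dist u w ≤ 1 := by have := hfar w; omega
      have h2 : 0 < G.dist u w := (hc u w).pos_dist_of_ne (Ne.symm hwu)
      rw [← dist_eq_one_iff_adj]
      omega
    obtain ⟨v, hv⟩ := Fintype.exists_ne_of_one_lt_card (by omega) u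
    obtain ⟨x, hx1, hx2, _⟩ := exists_not3 h4 u v v
    by_cases hvx : G.Adj v x
    · exfalso
      have hb := (isAcyclic_iff_forall_adj_isBridge.mp hac) hvx
      rw [isBridge_iff] at hb
      refine hb (reachable_delete_edges_iff_exists_walk.mpr ?_)
      refine ⟨Walk.cons ((hadjall v hv).symm) (Walk.cons (hadjall x hx1) Walk.nil), ?_⟩
      intro hmem
      simp only [Walk.edges_cons, Walk.edges_nil, List.mem_cons, List.not_mem_nil, or_false,
        Sym2.eq_iff] at hmem
      tauto
    · exact ⟨v, u, x, (hadjall v hv).symm, (hadjall x hx1).symm, hvx, Ne.symm hx2⟩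



section Main
variable {V : Type*} [Fintype V] {G : SimpleGraph V}

lemma card_edge_eq [Fintype G.edgeSet] : Fintype.card G.edgeSet = G.edgeSet.ncard := by
  rw [← Nat.card_eq_fintype_card, Nat.card_coe_set_eq]

/-- Lower bound: any proper coloring of the complement of the central graph
bounded by `k` has `k ≥ m`. -/
lemma lower_m {k : ℕ} {f : V ⊕ G.edgeSet → ℕ}
    (hprop : ∀ u v, (centralGraph G)ᶜ.Adj u v → f u ≠ f v)
    (hb : ∀ v, f v < k) : G.edgeSet.ncard ≤ k := by
  classical
  haveI : Fintype G.edgeSet := Fintype.ofFinite _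
  have hinj : Function.Injective (fun e : G.edgeSet => (⟨f (Sum.inr e), hb _⟩ : Fin k)) := by
    intro e e' h
    by_contra hne
    exact hprop _ _ (cAdj_rr.mpr hne) (by simpa using congrArg Fin.val h)
  have := Fintype.card_le_of_injective _ hinj
  rw [card_edge_eq, Fintype.card_fin] at this
  exact this

/-- In the tree case, `m` colors are impossible. -/
lemma tree_lower (htree : G.IsTree) (hn4 : 4 ≤ Fintype.card V)
    {f : V ⊕ G.edgeSet → ℕ}
    (hprop : ∀ u v, (centralGraph G)ᶜ.Adj u v → f u ≠ f v)
    (hb : ∀ v, f v < G.edgeSet.ncard) : False := by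
  classical
  haveI : Fintype G.edgeSet := Fintype.ofFinite _
  set m := G.edgeSet.ncard with hm
  have hE : Fintype.card G.edgeSet = m := card_edge_eq
  have hmn : m + 1 = Fintype.card V := by
    have h1 := htree.card_edgeFinset
    have h2 : G.edgeFinset.card = m := by
      rw [hm, Set.ncard_eq_toFinset_card']
      congr 1
    omega
  let g : G.edgeSet → Fin m := fun e => ⟨f (Sum.inr e), hb _⟩
  have hginj : Function.Injective g := by
    intro e e' h
    by_contra hne
    exact hprop _ _ (cAdj_rr.mpr hne) (by simpa [g] using congrArg Fin.val h)
  have hgbij : Function.Bijective g :=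
    (Fintype.bijective_iff_injective_and_card g).mpr ⟨hginj, by rw [hE, Fintype.card_fin]⟩
  have hPhi : ∀ u : V, ∃ e : G.edgeSet, f (Sum.inr e) = f (Sum.inl u) := by
    intro u
    obtain ⟨e, he⟩ := hgbij.surjective ⟨f (Sum.inl u), hb _⟩
    exact ⟨e, congrArg Fin.val he⟩
  choose Phi hPhieq using hPhi
  have hmem : ∀ u, u ∈ (Phi u : Sym2 V) := by
    intro u
    by_contra hmemu
    exact hprop (Sum.inl u) (Sum.inr (Phi u)) (cAdj_lr.mpr hmemu) (hPhieq u).symm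
  have hPhiinj : Function.Injective Phi := by
    intro u v h
    by_contra hne
    have hsym : (Phi u : Sym2 V) = s(u, v) := by
      have h1 := hmem u
      have h2 := hmem v
      rw [← h] at h2
      exact (Sym2.mem_and_mem_iff hne).mp ⟨h1, h2⟩
    have hadj : G.Adj u v := by
      have h3 := (Phi u).2
      rw [hsym] at h3
      exact h3
    exact hprop _ _ (cAdj_ll.mpr hadj) (by rw [← hPhieq u, ← hPhieq v, h])
  have hcard := Fintype.card_le_of_injective Phi hPhiinj
  rw [hE] at hcard
  omega

lemma tree_upper (htree : G.IsTree) (hn4 : 4 ≤ Fintype.card V) :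
    ∃ f : V ⊕ G.edgeSet → ℕ, IsTDColoring (centralGraph G)ᶜ f ∧
      ∀ v, f v < G.edgeSet.ncard + 1 := by
  classical
  haveI : Fintype G.edgeSet := Fintype.ofFinite _
  set m := G.edgeSet.ncard with hm
  have hE : Fintype.card G.edgeSet = m := card_edge_eq
  let ι : G.edgeSet ≃ Fin m := Fintype.equivFinOfCardEq hE
  have hc := htree.isConnected
  obtain ⟨a, b, a', hab, ha'b, hnaa', hnea⟩ := exists_cherry hc htree.IsAcyclic hn4
  obtain ⟨p, hp⟩ := exists_parent hc a'
  have hba' : b ≠ a' := ha'b.ne'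
  have hba : b ≠ a := hab.ne'
  have hdb : G.dist a' b = 1 := dist_eq_one_iff_adj.mpr ha'b
  have hpb : p b = a' := by
    have h1 := (hp b hba').2
    rw [hdb] at h1
    have h0 : G.dist a' (p b) = 0 := by omega
    exact (((hc a' (p b)).dist_eq_zero_iff).mp h0).symm
  let Fu : V → G.edgeSet := fun u =>
    if h : u ≠ a' then ⟨s(u, p u), (G.mem_edgeSet).mpr (hp u h).1⟩
    else ⟨s(a, b), (G.mem_edgeSet).mpr hab⟩
  have hFu : ∀ u, u ≠ a' → (Fu u : Sym2 V) = s(u, p u) := by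
    intro u h; simp only [Fu, dif_pos h]
  let e0 : G.edgeSet := ⟨s(a, b), (G.mem_edgeSet).mpr hab⟩
  obtain ⟨w0, hw0a, hw0b, hw0a'⟩ := exists_not3 hn4 a b a'
  let f : V ⊕ G.edgeSet → ℕ := Sum.elim
    (fun u => if u = a ∨ u = a' then m else (ι (Fu u) : ℕ))
    (fun e => (ι e : ℕ))
  have hfb : ∀ v, f v < m + 1 := by
    rintro (u | e)
    · simp only [f, Sum.elim_inl]
      split
      · omega
      · exact Nat.lt_succ_of_lt (ι _).isLt
    · exact Nat.lt_succ_of_lt (ι _).isLt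
  have hvalne : ∀ (e : G.edgeSet), ((ι e : ℕ)) ≠ m := fun e => Nat.ne_of_lt (ι e).isLt
  have hFuinj : ∀ {u v : V}, u ≠ a' → v ≠ a' → Fu u = Fu v → u = v := by
    intro u v hu hv h
    apply parent_inj hp hu hv
    have h2 := congrArg (Subtype.val) h
    rwa [hFu u hu, hFu v hv] at h2
  have hmemFu : ∀ u, u ≠ a' → u ∈ (Fu u : Sym2 V) := by
    intro u h; rw [hFu u h]; exact Sym2.mem_mk_left _ _
  have hfns : ∀ u, u ≠ a → u ≠ a' → f (Sum.inl u) = (ι (Fu u) : ℕ) := by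
    intro u h1 h2
    simp only [f, Sum.elim_inl, if_neg (by tauto : ¬(u = a ∨ u = a'))]
  have hfsp : ∀ u, (u = a ∨ u = a') → f (Sum.inl u) = m := by
    intro u h; simp only [f, Sum.elim_inl, if_pos h]
  have hdec : ∀ (x : V ⊕ G.edgeSet) (e : G.edgeSet), f x = (ι e : ℕ) →
      (x = Sum.inr e) ∨ (∃ u, x = Sum.inl u ∧ u ≠ a ∧ u ≠ a' ∧ Fu u = e) := by
    rintro (u | e') e h
    · right
      have hu : ¬(u = a ∨ u = a') := by
        intro hsp
        rw [hfsp u hsp] at h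
        exact hvalne e h.symm
      push_neg at hu
      refine ⟨u, rfl, hu.1, hu.2, ?_⟩
      rw [hfns u hu.1 hu.2] at h
      exact ι.injective (Fin.val_injective h)
    · left
      simp only [f, Sum.elim_inr] at h
      rw [ι.injective (Fin.val_injective h)]
  have hFune0 : ∀ u, u ≠ a → u ≠ a' → Fu u ≠ e0 := by
    intro u h1 h2 h
    have hmu := hmemFu u h2
    rw [h] at hmu
    simp only [e0, Sym2.mem_iff] at hmu
    rcases hmu with h' | h'
    · exact h1 h'
    · rw [h'] at h
      have h3 := congrArg Subtype.val h
      rw [hFu b hba', hpb] at h3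
      simp only [e0] at h3
      rw [Sym2.eq_iff] at h3
      rcases h3 with ⟨h3, _⟩ | ⟨_, h4⟩
      · exact hba h3
      · exact hnea h4.symm
  have hprop : ∀ x y, (centralGraph G)ᶜ.Adj x y → f x ≠ f y := by
    have key : ∀ (u : V) (e : G.edgeSet), u ∉ (e : Sym2 V) →
        f (Sum.inl u) ≠ f (Sum.inr e) := by
      intro u e hne h
      have h' : f (Sum.inl u) = (ι e : ℕ) := by
        simp only [f, Sum.elim_inr] at h
        exact h
      rcases hdec (Sum.inl u) e h' with h'' | ⟨v, hv, hv1, hv2, hv3⟩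
      · cases h''
      · obtain rfl : u = v := Sum.inl.inj hv
        rw [← hv3] at hne
        exact hne (hmemFu u hv2)
    rintro (u | e) (v | e') hadj
    · rw [cAdj_ll] at hadj
      intro h
      by_cases hu : u = a ∨ u = a' <;> by_cases hv : v = a ∨ v = a'
      · rcases hu with rfl | rfl <;> rcases hv with rfl | rfl
        · exact hadj.ne rfl
        · exact hnaa' hadj
        · exact hnaa' hadj.symm
        · exact hadj.ne rfl
      · push_neg at hv
        rw [hfsp u hu, hfns v hv.1 hv.2] at h
        exact hvalne _ h.symm
      · push_neg at hu
        rw [hfsp v hv, hfns u hu.1 hu.2] at h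
        exact hvalne _ h
      · push_neg at hu; push_neg at hv
        rw [hfns u hu.1 hu.2, hfns v hv.1 hv.2] at h
        exact hadj.ne (hFuinj hu.2 hv.2 (ι.injective (Fin.val_injective h)))
    · exact key u e' (cAdj_lr.mp hadj)
    · intro h; exact key v e (cAdj_rl.mp hadj) h.symm
    · rw [cAdj_rr] at hadj
      intro h
      exact hadj (ι.injective (Fin.val_injective h))
  have hfinr : ∀ e : G.edgeSet, f (Sum.inr e) = (ι e : ℕ) := fun e => rfl
  have hclass_e0 : ∀ w, f w = (ι e0 : ℕ) → w = Sum.inr e0 := by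
    intro w h
    rcases hdec w e0 h with h' | ⟨v, hv, hv1, hv2, hv3⟩
    · exact h'
    · exact absurd hv3 (hFune0 v hv1 hv2)
  have hdom : ∀ x, ∃ c, (∃ w, f w = c) ∧ ∀ w, f w = c → (centralGraph G)ᶜ.Adj x w := by
    rintro (u | e)
    · by_cases hub : u = b
      · subst hub
        refine ⟨m, ⟨Sum.inl a, hfsp a (Or.inl rfl)⟩, ?_⟩
        rintro (v | e') h
        · have hv : v = a ∨ v = a' := by
            by_contra hv
            push_neg at hv
            rw [hfns v hv.1 hv.2] at h
            exact hvalne _ h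
          rw [cAdj_ll]
          rcases hv with rfl | rfl
          · exact hab.symm
          · exact ha'b.symm
        · exact absurd h (hvalne _)
      · by_cases hua : u = a
        · subst hua
          refine ⟨(ι (Fu b) : ℕ), ⟨Sum.inl b, hfns b hba hba'⟩, ?_⟩
          intro w h
          rcases hdec w (Fu b) h with rfl | ⟨v, rfl, hv1, hv2, hv3⟩
          · rw [cAdj_lr]
            intro hmem
            rw [hFu b hba', hpb] at hmem
            simp only [Sym2.mem_iff] at hmem
            rcases hmem with rfl | rfl
            · exact hba rfl
            · exact hnea rfl
          · obtain rfl : v = b := hFuinj hv2 hba' hv3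
            exact cAdj_ll.mpr hab
        · refine ⟨(ι e0 : ℕ), ⟨Sum.inr e0, rfl⟩, ?_⟩
          intro w h
          rw [hclass_e0 w h]
          rw [cAdj_lr]
          simp only [e0, Sym2.mem_iff]
          push_neg
          exact ⟨hua, hub⟩
    · by_cases he : e = e0
      · subst he
        refine ⟨(ι (Fu w0) : ℕ), ⟨Sum.inl w0, hfns w0 hw0a hw0a'⟩, ?_⟩
        intro w h
        rcases hdec w (Fu w0) h with rfl | ⟨v, rfl, hv1, hv2, hv3⟩
        · rw [cAdj_rr]
          exact fun hh => (hFune0 w0 hw0a hw0a') hh.symm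
        · obtain rfl : v = w0 := hFuinj hv2 hw0a' hv3
          rw [cAdj_rl]
          simp only [e0, Sym2.mem_iff]
          push_neg
          exact ⟨hw0a, hw0b⟩
      · refine ⟨(ι e0 : ℕ), ⟨Sum.inr e0, rfl⟩, ?_⟩
        intro w h
        rw [hclass_e0 w h, cAdj_rr]
        exact he
  exact ⟨f, ⟨hprop, hdom⟩, hfb⟩

lemma nontree_upper (hconn : G.Connected) (hnt : ¬ G.IsTree) (hn4 : 4 ≤ Fintype.card V) :
    ∃ f : V ⊕ G.edgeSet → ℕ, IsTDColoring (centralGraph G)ᶜ f ∧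
      ∀ v, f v < G.edgeSet.ncard := by
  classical
  haveI : Fintype G.edgeSet := Fintype.ofFinite _
  set m := G.edgeSet.ncard with hm
  have hE : Fintype.card G.edgeSet = m := card_edge_eq
  let ι : G.edgeSet ≃ Fin m := Fintype.equivFinOfCardEq hE
  have hac : ¬ G.IsAcyclic := fun h => hnt ⟨hconn, h⟩
  rw [isAcyclic_iff_forall_adj_isBridge] at hac
  push_neg at hac
  obtain ⟨r, s, hrs, hbr⟩ := hac
  rw [isBridge_iff] at hbr
  push_neg at hbr
  have hreach := hbr
  set G' := G \ fromEdgeSet {s(r, s)} with hG'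
  have hG'c : G'.Connected := connected_sdiff hconn hreach
  have hG'adj : ∀ {x y : V}, G'.Adj x y ↔ G.Adj x y ∧ s(x, y) ≠ s(r, s) := by
    intro x y
    rw [hG', sdiff_adj, fromEdgeSet_adj]
    constructor
    · rintro ⟨h1, h2⟩
      exact ⟨h1, fun hh => h2 ⟨by simp [hh], h1.ne⟩⟩
    · rintro ⟨h1, h2⟩
      exact ⟨h1, fun hh => h2 (by simpa using hh.1)⟩
  obtain ⟨p, hp⟩ := exists_parent hG'c r
  have hsr : s ≠ r := hrs.ne'
  have hps : p s ≠ r := by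
    intro h
    have h1 := (hp s hsr).1
    rw [h, hG'adj] at h1
    exact h1.2 (Sym2.eq_swap)
  let F : V → G.edgeSet := fun u =>
    if h : u ≠ r then ⟨s(u, p u), (G.mem_edgeSet).mpr ((hG'adj.mp (hp u h).1).1)⟩
    else ⟨s(r, s), (G.mem_edgeSet).mpr hrs⟩
  have hFne : ∀ u, u ≠ r → (F u : Sym2 V) = s(u, p u) := fun u h => by
    simp only [F, dif_pos h]
  have hFr : (F r : Sym2 V) = s(r, s) := by simp only [F, dif_neg (not_not_intro rfl)]
  have hFinj : Function.Injective F := by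
    intro u v h
    by_cases hu : u = r <;> by_cases hv : v = r
    · rw [hu, hv]
    · exfalso
      have h2 := congrArg Subtype.val h
      rw [hu, hFr, hFne v hv] at h2
      exact (hG'adj.mp (hp v hv).1).2 h2.symm
    · exfalso
      have h2 := congrArg Subtype.val h
      rw [hv, hFr, hFne u hu] at h2
      exact (hG'adj.mp (hp u hu).1).2 h2
    · apply parent_inj hp hu hv
      have h2 := congrArg Subtype.val h
      rwa [hFne u hu, hFne v hv] at h2
  have hmcard : Fintype.card V ≤ m := by
    have := Fintype.card_le_of_injective F hFinj
    rwa [hE] at this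
  have huF : ∀ u, u ∈ (F u : Sym2 V) := by
    intro u
    by_cases hu : u = r
    · rw [hu, hFr]; exact Sym2.mem_mk_left _ _
    · rw [hFne u hu]; exact Sym2.mem_mk_left _ _
  let f : V ⊕ G.edgeSet → ℕ := Sum.elim (fun u => (ι (F u) : ℕ)) (fun e => (ι e : ℕ))
  have hfb : ∀ v, f v < m := by rintro (u | e) <;> exact (ι _).isLt
  have hdec : ∀ (x) (e : G.edgeSet), f x = (ι e : ℕ) →
      (x = Sum.inr e) ∨ (∃ u, x = Sum.inl u ∧ F u = e) := by
    rintro (u | e') e h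
    · exact Or.inr ⟨u, rfl, ι.injective (Fin.val_injective h)⟩
    · exact Or.inl (by rw [ι.injective (Fin.val_injective h)])
  have hprop : ∀ x y, (centralGraph G)ᶜ.Adj x y → f x ≠ f y := by
    have key : ∀ (u : V) (e : G.edgeSet), u ∉ (e : Sym2 V) →
        f (Sum.inl u) ≠ f (Sum.inr e) := by
      intro u e hne h
      have h2 : F u = e := ι.injective (Fin.val_injective h)
      rw [← h2] at hne
      exact hne (huF u)
    rintro (u | e) (v | e') hadj
    · rw [cAdj_ll] at hadj
      intro h
      exact hadj.ne (hFinj (ι.injective (Fin.val_injective h)))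
    · exact key u e' (cAdj_lr.mp hadj)
    · intro h
      exact key v e (cAdj_rl.mp hadj) h.symm
    · intro h
      exact (cAdj_rr.mp hadj) (ι.injective (Fin.val_injective h))
  have hdom : ∀ x, ∃ c, (∃ w, f w = c) ∧ ∀ w, f w = c → (centralGraph G)ᶜ.Adj x w := by
    rintro (u | e)
    · by_cases hu : u = r
      · subst hu
        refine ⟨(ι (F s) : ℕ), ⟨Sum.inr (F s), rfl⟩, ?_⟩
        intro w h
        rcases hdec w (F s) h with rfl | ⟨v, rfl, hv⟩
        · rw [cAdj_lr, hFne s hsr]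
          simp only [Sym2.mem_iff]
          push_neg
          exact ⟨Ne.symm hsr, fun hh => hps hh.symm⟩
        · obtain rfl : v = s := hFinj hv
          exact cAdj_ll.mpr hrs
      · by_cases hpu : p u = r
        · refine ⟨(ι (F r) : ℕ), ⟨Sum.inr (F r), rfl⟩, ?_⟩
          intro w h
          rcases hdec w (F r) h with rfl | ⟨v, rfl, hv⟩
          · rw [cAdj_lr, hFr]
            simp only [Sym2.mem_iff]
            push_neg
            refine ⟨hu, ?_⟩
            intro hus
            rw [hus] at hpu
            exact hps hpu
          · obtain rfl : v = r := hFinj hv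
            refine cAdj_ll.mpr ?_
            have h3 := (hG'adj.mp (hp u hu).1).1
            rwa [hpu] at h3
        · refine ⟨(ι (F (p u)) : ℕ), ⟨Sum.inr (F (p u)), rfl⟩, ?_⟩
          intro w h
          rcases hdec w (F (p u)) h with rfl | ⟨v, rfl, hv⟩
          · rw [cAdj_lr, hFne (p u) hpu]
            simp only [Sym2.mem_iff]
            push_neg
            constructor
            · exact ((hp u hu).1).ne
            · intro hupp
              have d1 := (hp u hu).2
              have d2 := (hp (p u) hpu).2
              rw [← hupp] at d2
              omega
          · obtain rfl : v = p u := hFinj hv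
            exact cAdj_ll.mpr ((hG'adj.mp (hp u hu).1).1)
    · obtain ⟨exy, hexy⟩ := e
      revert hexy
      induction exy using Sym2.ind with
      | _ x y =>
        intro hexy
        have hxy : G.Adj x y := (G.mem_edgeSet).mp hexy
        obtain ⟨e', he1, he2, he3⟩ :=
          exists_not3 (show 4 ≤ Fintype.card G.edgeSet by omega)
            (⟨s(x, y), hexy⟩ : G.edgeSet) (F x) (F y)
        refine ⟨(ι e' : ℕ), ⟨Sum.inr e', rfl⟩, ?_⟩
        intro w h
        rcases hdec w e' h with rfl | ⟨v, rfl, hv⟩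
        · exact cAdj_rr.mpr (Ne.symm he1)
        · rw [cAdj_rl]
          simp only [Sym2.mem_iff]
          push_neg
          constructor
          · intro hvx
            rw [hvx] at hv
            exact he2 hv.symm
          · intro hvy
            rw [hvy] at hv
            exact he3 hv.symm
  exact ⟨f, ⟨hprop, hdom⟩, hfb⟩

end Main
end TDaux

set_option maxHeartbeats 1000000 in
theorem tdcn_compl_central {V : Type*} [Fintype V] (G : SimpleGraph V)
    (n m : ℕ) (hn : Fintype.card V = n) (hn4 : 4 ≤ n)
    (hm : G.edgeSet.ncard = m) (hconn : G.Connected) :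
    (G.IsTree → tdcn (centralGraph G)ᶜ = n) ∧
    (¬ G.IsTree → tdcn (centralGraph G)ᶜ = m) := by
  classical
  have hn4' : 4 ≤ Fintype.card V := by omega
  unfold tdcn
  set S := {k | ∃ f : (V ⊕ G.edgeSet) → ℕ, IsTDColoring (centralGraph G)ᶜ f ∧ ∀ v, f v < k}
    with hS
  constructor
  · intro htree
    haveI : Fintype G.edgeSet := Fintype.ofFinite _
    have hmn : m + 1 = n := by
      have h1 := htree.card_edgeFinset
      have h2 : G.edgeFinset.card = G.edgeSet.ncard := by
        rw [Set.ncard_eq_toFinset_card']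
        congr 1
      omega
    obtain ⟨f, hf, hfb⟩ := TDaux.tree_upper htree hn4'
    have hmem : n ∈ S := ⟨f, hf, fun v => by have := hfb v; omega⟩
    refine le_antisymm (Nat.sInf_le hmem) ?_
    obtain ⟨f', hf', hb'⟩ := Nat.sInf_mem (⟨n, hmem⟩ : S.Nonempty)
    have h1 : m ≤ sInf S := by
      have := TDaux.lower_m hf'.1 hb'
      omega
    have h2 : sInf S ≠ m := by
      intro heq
      exact TDaux.tree_lower htree hn4' hf'.1 (fun v => by have := hb' v; omega)
    omega
  · intro hnt
    obtain ⟨f, hf, hfb⟩ := TDaux.nontree_upper hconn hnt hn4'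
    have hmem : m ∈ S := ⟨f, hf, fun v => by have := hfb v; omega⟩
    refine le_antisymm (Nat.sInf_le hmem) ?_
    obtain ⟨f', hf', hb'⟩ := Nat.sInf_mem (⟨m, hmem⟩ : S.Nonempty)
    have := TDaux.lower_m hf'.1 hb'
    omega
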